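/- Let M be a map with flag set F and generators s0, s1, s2, and let r0, r1, r2 be the truncation generators on F × {0,1,2}. For every automorphism γ of M, the permutation of F × {0,1,2} given by (Φ,i) ↦ (γΦ, i) commutes with each of r0, r1, r2, i.e. is an automorphism of Tr(M); moreover the resulting assignment is an injective group homomorphism from Γ(M) into Γ(Tr(M)). -/
import Mathlib


/-- every automorphism γ of M induces the automorphism (Φ,i) ↦ (γΦ,i) of Tr(M),
and this assignment is an injective group homomorphism Γ(M) → Γ(Tr(M)). -/
theorem truncation_automorphism_embedding
    {F : Type*} [Fintype F] [Nonempty F]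
    (s0 s1 s2 : Equiv.Perm F)
    (hs0i : s0 * s0 = 1) (hs0f : ∀ x, s0 x ≠ x)
    (hs1i : s1 * s1 = 1) (hs1f : ∀ x, s1 x ≠ x)
    (hs2i : s2 * s2 = 1) (hs2f : ∀ x, s2 x ≠ x)
    (hcomm : s0 * s2 = s2 * s0)
    (hs02i : (s0 * s2) * (s0 * s2) = 1) (hs02f : ∀ x, (s0 * s2) x ≠ x)
    (htrans : ∀ x y : F, ∃ g ∈ Subgroup.closure ({s0, s1, s2} : Set (Equiv.Perm F)), g x = y)
    (r0 r1 r2 : Equiv.Perm (F × Fin 3))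
    (hr0 : ∀ Φ : F, r0 (Φ, 0) = (s1 Φ, 0) ∧ r0 (Φ, 1) = (s0 Φ, 1) ∧ r0 (Φ, 2) = (s1 Φ, 2))
    (hr1 : ∀ Φ : F, r1 (Φ, 0) = (s2 Φ, 0) ∧ r1 (Φ, 1) = (Φ, 2) ∧ r1 (Φ, 2) = (Φ, 1))
    (hr2 : ∀ Φ : F, r2 (Φ, 0) = (Φ, 2) ∧ r2 (Φ, 1) = (s2 Φ, 1) ∧ r2 (Φ, 2) = (Φ, 0)) :
    (∀ γ ∈ Subgroup.centralizer ({s0, s1, s2} : Set (Equiv.Perm F)),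
      Equiv.prodCongr γ (Equiv.refl (Fin 3)) ∈
        Subgroup.centralizer ({r0, r1, r2} : Set (Equiv.Perm (F × Fin 3)))) ∧
    ∃ f : ↥(Subgroup.centralizer ({s0, s1, s2} : Set (Equiv.Perm F))) →*
          ↥(Subgroup.centralizer ({r0, r1, r2} : Set (Equiv.Perm (F × Fin 3)))),
      Function.Injective f ∧
      ∀ γ : ↥(Subgroup.centralizer ({s0, s1, s2} : Set (Equiv.Perm F))),
        ∀ p : F × Fin 3, ((f γ : Equiv.Perm (F × Fin 3)) p) = ((γ : Equiv.Perm F) p.1, p.2) := by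

  have main : ∀ γ ∈ Subgroup.centralizer ({s0, s1, s2} : Set (Equiv.Perm F)),
      Equiv.prodCongr γ (Equiv.refl (Fin 3)) ∈
        Subgroup.centralizer ({r0, r1, r2} : Set (Equiv.Perm (F × Fin 3))) := by
    intro γ hγ
    rw [Subgroup.mem_centralizer_iff] at hγ ⊢
    have h0 : s0 * γ = γ * s0 := hγ s0 (by simp)
    have h1 : s1 * γ = γ * s1 := hγ s1 (by simp)
    have h2 : s2 * γ = γ * s2 := hγ s2 (by simp)
    have e0 : ∀ x, s0 (γ x) = γ (s0 x) := fun x => by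
      rw [← Equiv.Perm.mul_apply, ← Equiv.Perm.mul_apply, h0]
    have e1 : ∀ x, s1 (γ x) = γ (s1 x) := fun x => by
      rw [← Equiv.Perm.mul_apply, ← Equiv.Perm.mul_apply, h1]
    have e2 : ∀ x, s2 (γ x) = γ (s2 x) := fun x => by
      rw [← Equiv.Perm.mul_apply, ← Equiv.Perm.mul_apply, h2]
    intro r hr
    apply Equiv.ext
    rintro ⟨Φ, i⟩
    have h3 : i = 0 ∨ i = 1 ∨ i = 2 := by revert i; decide
    rcases hr with rfl | rfl | rfl <;> rcases h3 with rfl | rfl | rfl <;>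
      simp only [Equiv.Perm.mul_apply, Equiv.prodCongr_apply, Prod.map, Equiv.refl_apply,
        (hr0 Φ).1, (hr0 Φ).2.1, (hr0 Φ).2.2, (hr1 Φ).1, (hr1 Φ).2.1, (hr1 Φ).2.2,
        (hr2 Φ).1, (hr2 Φ).2.1, (hr2 Φ).2.2,
        (hr0 (γ Φ)).1, (hr0 (γ Φ)).2.1, (hr0 (γ Φ)).2.2, (hr1 (γ Φ)).1, (hr1 (γ Φ)).2.1,
        (hr1 (γ Φ)).2.2, (hr2 (γ Φ)).1, (hr2 (γ Φ)).2.1, (hr2 (γ Φ)).2.2,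
        e0, e1, e2]
  refine ⟨main, ?_⟩
  refine ⟨{ toFun := fun γ => ⟨Equiv.prodCongr γ (Equiv.refl (Fin 3)), main γ γ.2⟩,
            map_one' := Subtype.ext (Equiv.ext fun p => rfl),
            map_mul' := fun a b => Subtype.ext (Equiv.ext fun p => rfl) }, ?_, ?_⟩
  · intro a b hab
    apply Subtype.ext
    apply Equiv.ext
    intro x
    have := Equiv.ext_iff.mp (Subtype.ext_iff.mp hab) (x, (0 : Fin 3))
    exact congrArg Prod.fst this
  · intro γ p; rfl
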